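/- arXiv:1905.13393 — 2 statements merged into one kernel-verified Lean document; each statement's English description precedes it below -/
import Mathlib

section
/- In F_q[x], D_m(x) = χ(2) · ∏_{b} (b - x), where the product is over all b ∈ F_q such that both 2 - b and 2 + b are nonsquares in F_q, and D_m denotes the image in F_q[x] of the m-th Dickson polynomial of the first kind. -/
open scoped Classical
open Polynomial

/-- The Legendre symbol on a finite field: `1` on nonzero squares, `-1` on nonsquares,
`0` at `0`. -/
noncomputable def χ {F : Type*} [Field F] [Fintype F] (a : F) : ℤ :=
  if a = 0 then 0 else if IsSquare a then 1 else -1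

/-- The Dickson polynomials of the first kind: `D 0 = 2`, `D 1 = X`,
`D (k+2) = X * D (k+1) - D k`. -/
noncomputable def dicksonFst : ℕ → Polynomial ℤ
  | 0 => 2
  | 1 => Polynomial.X
  | (k + 2) => Polynomial.X * dicksonFst (k + 1) - dicksonFst k

private lemma dicksonFst_eq_dickson : ∀ n, dicksonFst n = Polynomial.dickson 1 1 n
  | 0 => by rw [dicksonFst, Polynomial.dickson_zero]; norm_num
  | 1 => by rw [dicksonFst, Polynomial.dickson_one]
  | (n+2) => by
      rw [dicksonFst, Polynomial.dickson_add_two, dicksonFst_eq_dickson (n+1),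
        dicksonFst_eq_dickson n, Polynomial.C_1, one_mul]

private lemma dickson_monic_aux (R : Type*) [CommRing R] [Nontrivial R] :
    ∀ n : ℕ, (Polynomial.dickson 1 (1:R) n).natDegree ≤ n ∧
      ((Polynomial.dickson 1 (1:R) (n+1)).Monic ∧
        (Polynomial.dickson 1 (1:R) (n+1)).natDegree = n+1) := by
  intro n
  induction n with
  | zero =>
    refine ⟨?_, by simpa [Polynomial.dickson_one] using Polynomial.monic_X,
      by simp [Polynomial.dickson_one]⟩
    rw [Polynomial.dickson_zero]
    norm_num
  | succ n ih =>
    obtain ⟨h0, hM, hd⟩ := ih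
    refine ⟨le_of_eq hd, ?_, ?_⟩
    · rw [Polynomial.dickson_add_two, Polynomial.C_1, one_mul]
      apply Polynomial.Monic.sub_of_left (Polynomial.monic_X.mul hM)
      have hdeg : (Polynomial.X * Polynomial.dickson 1 (1:R) (n+1)).natDegree = n + 2 := by
        rw [Polynomial.monic_X.natDegree_mul hM, Polynomial.natDegree_X, hd]; omega
      calc (Polynomial.dickson 1 (1:R) n).degree ≤ (n : WithBot ℕ) := by
            exact (Polynomial.degree_le_natDegree).trans (by exact_mod_cast h0)
        _ < ((n+2 : ℕ) : WithBot ℕ) := by exact_mod_cast by omega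
        _ = _ := by
            rw [← hdeg]
            exact (Polynomial.degree_eq_natDegree (Polynomial.monic_X.mul hM).ne_zero).symm
    · rw [Polynomial.dickson_add_two, Polynomial.C_1, one_mul]
      have hdeg : (Polynomial.X * Polynomial.dickson 1 (1:R) (n+1)).natDegree = n + 2 := by
        rw [Polynomial.monic_X.natDegree_mul hM, Polynomial.natDegree_X, hd]; omega
      rw [Polynomial.natDegree_sub_eq_left_of_natDegree_lt, hdeg]
      rw [hdeg]; omega

private lemma pow_card_fixed {F : Type*} [Field F] [Fintype F] {K : Type*} [Field K]
    [Algebra F K] {x : K} (hx : x ^ (Fintype.card F) = x) :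
    ∃ a : F, algebraMap F K a = x := by
  by_contra hc
  push_neg at hc
  set q := Fintype.card F with hq
  set Z : Finset K := insert x ((Finset.univ : Finset F).image (algebraMap F K)) with hZ
  have hcard : Z.card = q + 1 := by
    rw [Finset.card_insert_of_notMem, Finset.card_image_of_injective _
      (algebraMap F K).injective, Finset.card_univ]
    simp only [Finset.mem_image]
    rintro ⟨a, -, ha⟩
    exact hc a ha
  have hne : (Polynomial.X ^ q - Polynomial.X : K[X]) ≠ 0 :=
    FiniteField.X_pow_card_sub_X_ne_zero K Fintype.one_lt_card
  have hsub : Z.val ⊆ (Polynomial.X ^ q - Polynomial.X : K[X]).roots := by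
    intro z hz
    rw [Finset.mem_val, hZ, Finset.mem_insert] at hz
    rw [Polynomial.mem_roots hne]
    rcases hz with rfl | hz
    · simp [Polynomial.IsRoot, hx]
    · obtain ⟨a, -, rfl⟩ := Finset.mem_image.mp hz
      have : (algebraMap F K a) ^ q = algebraMap F K a := by
        rw [← map_pow, FiniteField.pow_card]
      simp [Polynomial.IsRoot, this]
  have := Polynomial.card_le_degree_of_subset_roots hsub
  rw [hcard, FiniteField.X_pow_card_sub_X_natDegree_eq K Fintype.one_lt_card] at this
  omega

private lemma sum_quadChar_prod (F : Type*) [Field F] [Fintype F] (hF : ringChar F ≠ 2) :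
    ∑ b : F, (quadraticChar F ((2 - b) * (2 + b)) : ℤ) = - quadraticChar F (-1) := by
  have h2 : (2 : F) ≠ 0 := Ring.two_ne_zero hF
  have h4 : (4 : F) ≠ 0 := by
    have : (4 : F) = 2 * 2 := by norm_num
    rw [this]; exact mul_ne_zero h2 h2
  have e1 : ∑ b : F, (quadraticChar F ((2 - b) * (2 + b)) : ℤ)
      = ∑ u : F, (quadraticChar F (u * (4 - u)) : ℤ) := by
    rw [← Equiv.sum_comp (Equiv.subLeft (2 : F))
      (fun u => (quadraticChar F (u * (4 - u)) : ℤ))]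
    refine Finset.sum_congr rfl fun b _ => ?_
    simp only [Equiv.subLeft_apply]
    congr 1
    ring
  have e2 : ∑ u : F, (quadraticChar F (u * (4 - u)) : ℤ)
      = ∑ u ∈ Finset.univ.erase (0 : F), (quadraticChar F (u * (4 - u)) : ℤ) := by
    rw [← Finset.add_sum_erase _ _ (Finset.mem_univ (0 : F))]
    simp
  have e3 : ∑ u ∈ Finset.univ.erase (0 : F), (quadraticChar F (u * (4 - u)) : ℤ)
      = ∑ u ∈ Finset.univ.erase (0 : F), (quadraticChar F (4 * u⁻¹ - 1) : ℤ) := by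
    refine Finset.sum_congr rfl fun u hu => ?_
    have hu0 : u ≠ 0 := Finset.ne_of_mem_erase hu
    have huu : u * (4 - u) = u ^ 2 * (4 * u⁻¹ - 1) := by
      field_simp
    rw [huu, map_mul, quadraticChar_sq_one' hu0, one_mul]
  have e4 : ∑ u ∈ Finset.univ.erase (0 : F), (quadraticChar F (4 * u⁻¹ - 1) : ℤ)
      = ∑ v ∈ Finset.univ.erase (0 : F), (quadraticChar F (4 * v - 1) : ℤ) := by
    refine Finset.sum_nbij' (fun u => u⁻¹) (fun v => v⁻¹) ?_ ?_ ?_ ?_ ?_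
    · intro a ha
      exact Finset.mem_erase.mpr ⟨inv_ne_zero (Finset.ne_of_mem_erase ha), Finset.mem_univ _⟩
    · intro a ha
      exact Finset.mem_erase.mpr ⟨inv_ne_zero (Finset.ne_of_mem_erase ha), Finset.mem_univ _⟩
    · intro a _; exact inv_inv a
    · intro a _; exact inv_inv a
    · intro a _; rfl
  have e5 : ∑ v ∈ Finset.univ.erase (0 : F), (quadraticChar F (4 * v - 1) : ℤ)
      = ∑ w ∈ Finset.univ.erase (-1 : F), (quadraticChar F w : ℤ) := by
    refine Finset.sum_nbij' (fun v => 4 * v - 1) (fun w => (w + 1) / 4) ?_ ?_ ?_ ?_ ?_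
    · intro a ha
      refine Finset.mem_erase.mpr ⟨?_, Finset.mem_univ _⟩
      have ha0 : a ≠ 0 := Finset.ne_of_mem_erase ha
      intro h
      apply ha0
      have : (4 : F) * a = 0 := by linear_combination h
      rcases mul_eq_zero.mp this with h' | h'
      · exact absurd h' h4
      · exact h'
    · intro a ha
      refine Finset.mem_erase.mpr ⟨?_, Finset.mem_univ _⟩
      have ha0 : a ≠ -1 := Finset.ne_of_mem_erase ha
      intro h
      apply ha0
      field_simp at h
      linear_combination h
    · intro a _; field_simp; ring
    · intro a _; field_simp; ring
    · intro a _; rfl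
  have e6 : ∑ w ∈ Finset.univ.erase (-1 : F), (quadraticChar F w : ℤ)
      = - quadraticChar F (-1) := by
    have hz := quadraticChar_sum_zero hF
    rw [← Finset.add_sum_erase Finset.univ (fun w : F => (quadraticChar F w : ℤ))
      (Finset.mem_univ (-1 : F))] at hz
    linarith
  rw [e1, e2, e3, e4, e5, e6]

private lemma count_S (F : Type*) [Field F] [Fintype F] (hF : ringChar F ≠ 2)
    (hsum : ∑ b : F, (quadraticChar F ((2 - b) * (2 + b)) : ℤ) = - quadraticChar F (-1)) :
    4 * (((Finset.univ.filter (fun b : F => ¬ IsSquare (2 - b) ∧ ¬ IsSquare (2 + b))).card : ℤ))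
      = (Fintype.card F : ℤ) - quadraticChar F (-1) := by
  have h2 : (2 : F) ≠ 0 := Ring.two_ne_zero hF
  have key : ∀ b : F, (1 - quadraticChar F (2 - b)) * (1 - quadraticChar F (2 + b))
      = if (¬ IsSquare ((2 : F) - b) ∧ ¬ IsSquare ((2 : F) + b)) then 4 else 0 := by
    intro b
    rcases eq_or_ne ((2 : F) - b) 0 with h0 | h0
    · have hb : b = 2 := by linear_combination -h0
      have h4 : (2 : F) + b = 2 ^ 2 := by rw [hb]; ring
      rw [if_neg (by rw [h0]; simp), h0, h4, quadraticChar_zero, quadraticChar_sq_one' h2]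
      ring
    rcases eq_or_ne ((2 : F) + b) 0 with h0' | h0'
    · have hb : b = -2 := by linear_combination h0'
      have h4 : (2 : F) - b = 2 ^ 2 := by rw [hb]; ring
      rw [if_neg (by rw [h0']; simp), h0', h4, quadraticChar_zero, quadraticChar_sq_one' h2]
      ring
    by_cases hs1 : IsSquare ((2 : F) - b)
    · rw [(quadraticChar_one_iff_isSquare h0).mpr hs1, if_neg (by tauto)]
      ring
    by_cases hs2 : IsSquare ((2 : F) + b)
    · rw [(quadraticChar_one_iff_isSquare h0').mpr hs2, if_neg (by tauto)]
      ring
    · rw [quadraticChar_neg_one_iff_not_isSquare.mpr hs1,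
        quadraticChar_neg_one_iff_not_isSquare.mpr hs2, if_pos ⟨hs1, hs2⟩]
      ring
  have hA : ∑ b : F, (quadraticChar F (2 - b) : ℤ) = 0 := by
    have := Equiv.sum_comp (Equiv.subLeft (2 : F)) (fun a => (quadraticChar F a : ℤ))
    simp only [Equiv.subLeft_apply] at this
    rw [this, quadraticChar_sum_zero hF]
  have hB : ∑ b : F, (quadraticChar F (2 + b) : ℤ) = 0 := by
    have := Equiv.sum_comp (Equiv.addLeft (2 : F)) (fun a => (quadraticChar F a : ℤ))
    simp only [Equiv.coe_addLeft] at this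
    rw [this, quadraticChar_sum_zero hF]
  have hC : ∑ b : F, (quadraticChar F (2 - b) : ℤ) * (quadraticChar F (2 + b)) =
      - quadraticChar F (-1) := by
    rw [← hsum]
    exact Finset.sum_congr rfl fun b _ => (map_mul (quadraticChar F) _ _).symm
  have lhs1 : 4 * (((Finset.univ.filter
        (fun b : F => ¬ IsSquare (2 - b) ∧ ¬ IsSquare (2 + b))).card : ℤ))
      = ∑ b : F, (1 - quadraticChar F (2 - b)) * (1 - quadraticChar F (2 + b)) := by
    rw [Finset.sum_congr rfl (fun b _ => key b), Finset.sum_ite, Finset.sum_const,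
      Finset.sum_const]
    simp [mul_comm]
  have expand : ∑ b : F, (1 - quadraticChar F (2 - b)) * (1 - quadraticChar F (2 + b))
      = ∑ b : F, ((1 : ℤ) - quadraticChar F (2 - b) - quadraticChar F (2 + b)
          + quadraticChar F (2 - b) * quadraticChar F (2 + b)) :=
    Finset.sum_congr rfl fun b _ => by ring
  rw [lhs1, expand, Finset.sum_add_distrib, Finset.sum_sub_distrib, Finset.sum_sub_distrib,
    Finset.sum_const, hA, hB, hC, Finset.card_univ]
  push_cast
  ring

private lemma quadChar_neg_one_eq (F : Type*) [Field F] [Fintype F]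
    (hodd : Fintype.card F % 2 = 1) :
    (quadraticChar F (-1) : ℤ) = (-1) ^ ((Fintype.card F - 1) / 2) := by
  have hF : ringChar F ≠ 2 := by
    intro h
    have := FiniteField.even_card_of_char_two (F := F) h
    omega
  have hne : (-1 : F) ≠ 0 := neg_ne_zero.mpr one_ne_zero
  rcases (by omega : Fintype.card F % 4 = 1 ∨ Fintype.card F % 4 = 3) with h | h
  · have h1 : IsSquare (-1 : F) := (FiniteField.isSquare_neg_one_iff).mpr (by omega)
    rw [(quadraticChar_one_iff_isSquare hne).mpr h1]
    have he : Even ((Fintype.card F - 1) / 2) := Nat.even_iff.mpr (by omega)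
    rw [he.neg_one_pow]
  · have h1 : ¬ IsSquare (-1 : F) := by
      rw [FiniteField.isSquare_neg_one_iff]
      omega
    rw [quadraticChar_neg_one_iff_not_isSquare.mpr h1]
    have ho : Odd ((Fintype.card F - 1) / 2) := Nat.odd_iff.mpr (by omega)
    rw [ho.neg_one_pow]

/-- From `hm`, pin down `4*m` against the cardinality in ℕ, according to `q mod 4`. -/

private lemma m_spec (F : Type*) [Field F] [Fintype F] (hodd : Fintype.card F % 2 = 1)
    (m : ℕ)
    (hm : 4 * (m : ℤ) = (Fintype.card F : ℤ) - (-1) ^ ((Fintype.card F - 1) / 2)) :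
    (Fintype.card F % 4 = 1 → 4 * m + 1 = Fintype.card F) ∧
    (Fintype.card F % 4 = 3 → 4 * m = Fintype.card F + 1) := by
  constructor
  · intro h
    have he : Even ((Fintype.card F - 1) / 2) := Nat.even_iff.mpr (by omega)
    rw [he.neg_one_pow] at hm
    have : 4 * (m : ℤ) + 1 = (Fintype.card F : ℤ) := by linarith
    exact_mod_cast this
  · intro h
    have ho : Odd ((Fintype.card F - 1) / 2) := Nat.odd_iff.mpr (by omega)
    rw [ho.neg_one_pow] at hm
    have : 4 * (m : ℤ) = (Fintype.card F : ℤ) + 1 := by linarith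
    exact_mod_cast this

private lemma chi_two_eq (F : Type*) [Field F] [Fintype F] (hodd : Fintype.card F % 2 = 1)
    (m : ℕ)
    (hm : 4 * (m : ℤ) = (Fintype.card F : ℤ) - (-1) ^ ((Fintype.card F - 1) / 2)) :
    χ (2 : F) = (-1) ^ m := by
  have hF : ringChar F ≠ 2 := by
    intro h
    have := FiniteField.even_card_of_char_two (F := F) h
    omega
  have h2 : (2 : F) ≠ 0 := Ring.two_ne_zero hF
  have hq1 : 1 ≤ Fintype.card F := Fintype.card_pos
  obtain ⟨hA, hB⟩ := m_spec F hodd m hm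
  have hsq2 := FiniteField.isSquare_two_iff (F := F)
  have hmain : (IsSquare (2 : F) ↔ m % 2 = 0) := by
    rcases (by omega : Fintype.card F % 8 = 1 ∨ Fintype.card F % 8 = 3 ∨
        Fintype.card F % 8 = 5 ∨ Fintype.card F % 8 = 7) with h | h | h | h
    · have := hA (by omega)
      rw [hsq2]
      omega
    · have := hB (by omega)
      rw [hsq2]
      omega
    · have := hA (by omega)
      rw [hsq2]
      omega
    · have := hB (by omega)
      rw [hsq2]
      omega
  rw [χ, if_neg h2]
  by_cases hs : IsSquare (2 : F)
  · rw [if_pos hs, (Nat.even_iff.mpr (hmain.mp hs)).neg_one_pow]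
  · rw [if_neg hs]
    have : m % 2 = 1 := by
      have := hmain.not.mp hs
      omega
    rw [(Nat.odd_iff.mpr this).neg_one_pow]

private lemma sum_cancel {K : Type*} [Field K] {y : K} (hy : y ≠ 0) (m : ℕ)
    (h : y ^ (2 * m) = -1) : y ^ m + (y⁻¹) ^ m = 0 := by
  have hym : y ^ m ≠ 0 := pow_ne_zero _ hy
  have key : y ^ m * (y ^ m + (y⁻¹) ^ m) = 0 := by
    rw [mul_add, ← pow_add, inv_pow, mul_inv_cancel₀ hym,
      show m + m = 2 * m by ring, h]
    ring
  rcases mul_eq_zero.mp key with h' | h'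
  · exact absurd h' hym
  · exact h'

private lemma dickson_root (F : Type*) [Field F] [Fintype F]
    (hodd : Fintype.card F % 2 = 1) (m : ℕ)
    (hm : 4 * (m : ℤ) = (Fintype.card F : ℤ) - (-1) ^ ((Fintype.card F - 1) / 2))
    {b : F} (hns1 : ¬ IsSquare ((2:F) - b)) (hns2 : ¬ IsSquare ((2:F) + b)) :
    Polynomial.eval b (Polynomial.dickson 1 (1:F) m) = 0 := by
  have hF : ringChar F ≠ 2 := by
    intro h
    have := FiniteField.even_card_of_char_two (F := F) h
    omega
  have h2 : (2 : F) ≠ 0 := Ring.two_ne_zero hF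
  have hb1 : (2 : F) - b ≠ 0 := fun h => hns1 (h ▸ IsSquare.zero)
  have hb2 : (2 : F) + b ≠ 0 := fun h => hns2 (h ▸ IsSquare.zero)
  have hbb : b ^ 2 - 4 ≠ 0 := by
    intro h
    have h' : ((2:F) - b) * ((2:F) + b) = 0 := by linear_combination -h
    rcases mul_eq_zero.mp h' with h'' | h''
    · exact hb1 h''
    · exact hb2 h''
  have hchi : quadraticChar F (b ^ 2 - 4) = quadraticChar F (-1) := by
    have hrel : b ^ 2 - 4 = (-1) * (((2:F) - b) * ((2:F) + b)) := by ring
    rw [hrel, map_mul, map_mul, quadraticChar_neg_one_iff_not_isSquare.mpr hns1,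
      quadraticChar_neg_one_iff_not_isSquare.mpr hns2]
    ring
  have hneg1ne : (-1 : F) ≠ 0 := neg_ne_zero.mpr one_ne_zero
  obtain ⟨hspec1, hspec3⟩ := m_spec F hodd m hm
  by_cases hex : ∃ a : F, a * (b - a) = 1
  -- Case A : the quadratic t^2 - b t + 1 splits over F
  · obtain ⟨a, ha⟩ := hex
    have ha0 : a ≠ 0 := by
      intro h
      rw [h, zero_mul] at ha
      exact zero_ne_one ha
    have hinv : a⁻¹ = b - a := inv_eq_of_mul_eq_one_right ha
    have hans : ¬ IsSquare a := by
      rintro ⟨c, hc⟩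
      apply hns2
      refine ⟨c * (1 + b - a), ?_⟩
      linear_combination (-(2 + b - a)) * ha + (1 + b - a) ^ 2 * hc
    have hd : 2 * a - b ≠ 0 := by
      intro h
      apply hbb
      linear_combination (2 * a - b) * h + 4 * ha
    have hsqneg : quadraticChar F (-1) = 1 := by
      rw [← hchi, show b ^ 2 - 4 = (2 * a - b) ^ 2 by linear_combination 4 * ha]
      exact quadraticChar_sq_one' hd
    have hq4 : Fintype.card F % 4 = 1 := by
      have h1 : IsSquare (-1 : F) := (quadraticChar_one_iff_isSquare hneg1ne).mp hsqneg
      have h3 := (FiniteField.isSquare_neg_one_iff (F := F)).mp h1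
      omega
    have hcard : 4 * m + 1 = Fintype.card F := hspec1 hq4
    have hq2 : Fintype.card F / 2 = 2 * m := by omega
    have hpow : a ^ (2 * m) = -1 := by
      rcases FiniteField.pow_dichotomy hF ha0 with h' | h'
      · exact absurd ((FiniteField.isSquare_iff hF ha0).mpr h') hans
      · rw [← hq2]
        exact h'
    have heval := Polynomial.dickson_one_one_eval_add_inv a (b - a) ha m
    rw [add_sub_cancel] at heval
    rw [heval, ← hinv]
    exact sum_cancel ha0 m hpow
  -- Case B : the quadratic is irreducible over F; work in the algebraic closure
  · set K := AlgebraicClosure F with hK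
    set b' : K := algebraMap F K b with hb'
    set p := ringChar F with hp
    obtain ⟨n, hpp, hcard⟩ := FiniteField.card F p
    haveI : CharP K p := charP_of_injective_algebraMap (algebraMap F K).injective p
    haveI : ExpChar K p := ExpChar.prime hpp
    have hphi : ∀ x : K, (iterateFrobenius K p n) x = x ^ (Fintype.card F) := by
      intro x
      rw [iterateFrobenius_def, hcard]
    -- find a root y of t^2 - b t + 1 in K
    have hdeg : (Polynomial.C (1:K) * Polynomial.X ^ 2 + Polynomial.C (-b') * Polynomial.X
        + Polynomial.C 1).degree ≠ 0 := by
      rw [Polynomial.degree_quadratic one_ne_zero]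
      exact (by decide : (2 : WithBot ℕ) ≠ 0)
    obtain ⟨y, hy_root⟩ := IsAlgClosed.exists_root _ hdeg
    have hy : y * (b' - y) = 1 := by
      have h0 := hy_root
      simp only [Polynomial.IsRoot, Polynomial.eval_add, Polynomial.eval_mul,
        Polynomial.eval_pow, Polynomial.eval_C, Polynomial.eval_X, Polynomial.eval_one,
        one_mul] at h0
      linear_combination -h0
    have hy0 : y ≠ 0 := by
      intro h
      rw [h, zero_mul] at hy
      exact zero_ne_one hy
    have hyinv : y⁻¹ = b' - y := inv_eq_of_mul_eq_one_right hy
    have hq0 : y ^ 2 - b' * y + 1 = 0 := by linear_combination -hy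
    -- y^q is a root of the same quadratic
    have hroot : (y ^ (Fintype.card F) - y) * (y ^ (Fintype.card F) - (b' - y)) = 0 := by
      have hfr := congrArg (iterateFrobenius K p n) hq0
      rw [map_add, map_sub, map_mul, map_one, map_pow, map_zero, hphi, hphi] at hfr
      have hbq : b' ^ (Fintype.card F) = b' := by
        rw [hb', ← map_pow, FiniteField.pow_card]
      rw [hbq] at hfr
      linear_combination hfr - hq0
    have hyq : y ^ (Fintype.card F) = b' - y := by
      rcases mul_eq_zero.mp hroot with h' | h'
      · exfalso
        have hyfix : y ^ (Fintype.card F) = y := by linear_combination h'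
        obtain ⟨a, haa⟩ := pow_card_fixed (F := F) hyfix
        apply hex
        refine ⟨a, (algebraMap F K).injective ?_⟩
        rw [map_mul, map_sub, map_one, haa]
        exact hy
      · linear_combination h'
    have hyq1 : y ^ (Fintype.card F + 1) = 1 := by
      rw [pow_succ, hyq]
      linear_combination hy
    -- q ≡ 3 mod 4
    have hnsq : ¬ IsSquare (b ^ 2 - 4) := by
      rintro ⟨d0, hd0⟩
      apply hex
      refine ⟨(b + d0) / 2, ?_⟩
      field_simp
      linear_combination hd0
    have hchin : quadraticChar F (-1) = -1 := by
      rw [← hchi]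
      exact quadraticChar_neg_one_iff_not_isSquare.mpr hnsq
    have hq4 : Fintype.card F % 4 = 3 := by
      by_contra hno
      have hsq : IsSquare (-1 : F) := (FiniteField.isSquare_neg_one_iff (F := F)).mpr hno
      rw [(quadraticChar_one_iff_isSquare hneg1ne).mpr hsq] at hchin
      norm_num at hchin
    have hcard4 : 4 * m = Fintype.card F + 1 := hspec3 hq4
    -- y ^ (2m) = -1
    have hsq2 : y ^ (2 * m) * y ^ (2 * m) = 1 := by
      rw [← pow_add, show 2 * m + 2 * m = 4 * m by ring, hcard4, hyq1]
    have h2m : y ^ (2 * m) = -1 := by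
      rcases mul_self_eq_one_iff.mp hsq2 with h' | h'
      · exfalso
        obtain ⟨s, hs⟩ := IsAlgClosed.exists_pow_nat_eq (k := K) y (n := 2) (by norm_num)
        have hs0 : s ≠ 0 := by
          intro h
          rw [h] at hs
          exact hy0 (by simpa using hs.symm)
        have hsq1 : s ^ (Fintype.card F + 1) = 1 := by
          rw [← hcard4, show 4 * m = 2 * (2 * m) by ring, pow_mul, hs, h']
        have hsq' : s ^ (Fintype.card F) = s⁻¹ := by
          rw [pow_succ] at hsq1
          exact eq_inv_of_mul_eq_one_left hsq1
        have htq : (s + s⁻¹) ^ (Fintype.card F) = s + s⁻¹ := by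
          have h1 : (iterateFrobenius K p n) (s + s⁻¹) = (s + s⁻¹) ^ (Fintype.card F) :=
            hphi _
          rw [map_add, map_inv₀] at h1
          simp only [hphi] at h1
          rw [← h1, hsq', inv_inv, add_comm]
        obtain ⟨c, hcc⟩ := pow_card_fixed (F := F) htq
        apply hns2
        refine ⟨c, (algebraMap F K).injective ?_⟩
        rw [map_add, map_mul, hcc, map_ofNat]
        have hss : s⁻¹ * s⁻¹ = y⁻¹ := by
          rw [← mul_inv, ← hs, sq]
        have hts : (s + s⁻¹) * (s + s⁻¹) = b' + 2 := by
          have hexp : (s + s⁻¹) * (s + s⁻¹) = s ^ 2 + 2 * (s * s⁻¹) + s⁻¹ * s⁻¹ := by ring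
          rw [hexp, hs, hss, mul_inv_cancel₀ hs0, hyinv]
          ring
        rw [hts]
        ring
      · exact h'
    -- finish: evaluate the Dickson polynomial
    have heval := Polynomial.dickson_one_one_eval_add_inv y (b' - y) hy m
    rw [add_sub_cancel] at heval
    have hevalK : Polynomial.eval b' (Polynomial.dickson 1 (1:K) m) = 0 := by
      rw [heval, ← hyinv]
      exact sum_cancel hy0 m h2m
    have hmap : (Polynomial.dickson 1 (1:F) m).map (algebraMap F K) =
        Polynomial.dickson 1 (1:K) m := by
      rw [Polynomial.map_dickson, map_one]
    apply (algebraMap F K).injective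
    rw [map_zero, ← Polynomial.eval₂_at_apply, ← Polynomial.eval_map, hmap]
    exact hevalK

/-- With `ε = (-1)^((q-1)/2)` and `m = (q - ε)/4` (a positive integer),
in `F_q[x]` we have `D_m(x) = χ(2) · ∏ (b - x)`, the product over all `b ∈ F_q` such that
both `2 - b` and `2 + b` are nonsquares in `F_q`. -/
theorem dickson_factorization' {F : Type*} [Field F] [Fintype F]
    (hq : Odd (Fintype.card F)) (m : ℕ) (hm0 : 0 < m)
    (hm : 4 * (m : ℤ) = (Fintype.card F : ℤ) - (-1) ^ ((Fintype.card F - 1) / 2)) :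
    (dicksonFst m).map (Int.castRingHom F) =
      Polynomial.C ((χ (2 : F) : ℤ) : F) *
        ∏ b ∈ Finset.univ.filter (fun b : F => ¬ IsSquare (2 - b) ∧ ¬ IsSquare (2 + b)),
          (Polynomial.C b - Polynomial.X) := by
  have hodd : Fintype.card F % 2 = 1 := Nat.odd_iff.mp hq
  have hF : ringChar F ≠ 2 := by
    intro h
    have := FiniteField.even_card_of_char_two (F := F) h
    omega
  set S := Finset.univ.filter (fun b : F => ¬ IsSquare (2 - b) ∧ ¬ IsSquare (2 + b)) with hS
  -- cardinality of S is m
  have hcount : 4 * (S.card : ℤ) = (Fintype.card F : ℤ) - quadraticChar F (-1) :=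
    count_S F hF (sum_quadChar_prod F hF)
  have hScard : S.card = m := by
    have h4 : 4 * (S.card : ℤ) = 4 * (m : ℤ) := by
      rw [hcount, quadChar_neg_one_eq F hodd, ← hm]
    have := mul_left_cancel₀ (by norm_num : (4:ℤ) ≠ 0) h4
    exact_mod_cast this
  -- the mapped Dickson polynomial
  have hPmap : (dicksonFst m).map (Int.castRingHom F) = Polynomial.dickson 1 (1:F) m := by
    rw [dicksonFst_eq_dickson, Polynomial.map_dickson, map_one]
  obtain ⟨m', rfl⟩ : ∃ m', m = m' + 1 := ⟨m - 1, by omega⟩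
  set P := Polynomial.dickson 1 (1:F) (m' + 1) with hP
  have hPm : P.Monic := (dickson_monic_aux F m').2.1
  have hPd : P.natDegree = m' + 1 := (dickson_monic_aux F m').2.2
  -- all elements of S are roots of P
  have hsub' : S.val ⊆ P.roots := by
    intro b hb
    have hbS : b ∈ S := hb
    obtain ⟨-, h1, h2⟩ := Finset.mem_filter.mp hbS
    rw [Polynomial.mem_roots hPm.ne_zero]
    exact dickson_root F hodd (m' + 1) hm h1 h2
  have hroots : P.roots = S.val := by
    refine (Multiset.eq_of_le_of_card_le (Finset.val_le_iff_val_subset.2 hsub') ?_).symm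
    calc Multiset.card P.roots ≤ P.natDegree := Polynomial.card_roots' P
      _ = Multiset.card S.val := by rw [hPd, ← hScard]; rfl
  -- the factorization of P
  have hfact : P = ∏ b ∈ S, (Polynomial.X - Polynomial.C b) := by
    have h := Polynomial.prod_multiset_X_sub_C_of_monic_of_roots_card_eq hPm
      (by rw [hroots, hPd, ← hScard]; rfl)
    rw [← h, hroots]
    rfl
  -- identify the constant
  have hchi2 : ((χ (2 : F) : ℤ) : F) = (-1 : F) ^ (m' + 1) := by
    rw [chi_two_eq F hodd (m' + 1) hm]
    push_cast
    ring
  rw [hPmap, hfact, hchi2]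
  have hprod : ∏ b ∈ S, (Polynomial.C b - Polynomial.X) =
      (-1 : F[X]) ^ (m' + 1) * ∏ b ∈ S, (Polynomial.X - Polynomial.C b) := by
    rw [show ((-1 : F[X]) ^ (m' + 1)) = ∏ _b ∈ S, (-1 : F[X]) by
      rw [Finset.prod_const, hScard], ← Finset.prod_mul_distrib]
    exact Finset.prod_congr rfl fun b _ => by ring
  rw [hprod, ← mul_assoc]
  have hC : Polynomial.C ((-1 : F) ^ (m' + 1)) = (-1 : F[X]) ^ (m' + 1) := by
    rw [map_pow, map_neg, map_one]
  rw [hC, ← mul_pow]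
  norm_num
end

section
/- The product of all a ∈ F_q such that both -a and 4 + a are nonsquares in F_q equals χ(2) · 2. -/
open scoped Classical

section AuxiliaryLemmas

open Finset Polynomial

variable {F : Type*} [Field F] [Fintype F]

/-- Product of `(c - t)` over a set of `n` elements all satisfying `t ^ n = e`. -/
lemma aux_prod_eq (S : Finset F) (n : ℕ) (hn : 0 < n) (e : F) (hcard : S.card = n)
    (hroot : ∀ t ∈ S, t ^ n = e) (c : F) : ∏ t ∈ S, (c - t) = c ^ n - e := by
  classical
  set p : Polynomial F := Polynomial.X ^ n - Polynomial.C e with hp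
  have hmonic : p.Monic := Polynomial.monic_X_pow_sub_C e hn.ne'
  have hpdeg : p.natDegree = n := Polynomial.natDegree_X_pow_sub_C
  have hle : S.val ≤ p.roots := by
    rw [Multiset.le_iff_subset S.nodup]
    intro a ha
    rw [Polynomial.mem_roots hmonic.ne_zero]
    have := hroot a ha
    simp [Polynomial.IsRoot, hp, this]
  have heq : S.val = p.roots := by
    refine Multiset.eq_of_le_of_card_le hle ?_
    calc Multiset.card p.roots ≤ p.natDegree := Polynomial.card_roots' p
    _ = Multiset.card S.val := by rw [hpdeg, ← hcard]; rfl
  have hsplits : Splits p := by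
    rw [Polynomial.splits_iff_card_roots, ← heq, hpdeg]
    simpa using hcard
  have hfact := hsplits.eq_prod_roots_of_monic hmonic
  have : p.eval c = ∏ t ∈ S, (c - t) := by
    conv_lhs => rw [hfact]
    rw [Polynomial.eval_multiset_prod, ← heq, Finset.prod_eq_multiset_prod,
      Multiset.map_map]
    simp
  rw [← this, hp]
  simp

lemma aux_sq_mul (hF : ringChar F ≠ 2) {a b : F} (ha : a ≠ 0) (hb : b ≠ 0) :
    IsSquare (a * b) ↔ (IsSquare a ↔ IsSquare b) := by
  classical
  have hab : a * b ≠ 0 := mul_ne_zero ha hb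
  have hm : quadraticChar F (a * b) = quadraticChar F a * quadraticChar F b := map_mul _ _ _
  by_cases Ha : IsSquare a <;> by_cases Hb : IsSquare b
  · simp [Ha, Hb, Ha.mul Hb]
  · have hqa : quadraticChar F a = 1 := (quadraticChar_one_iff_isSquare ha).mpr Ha
    have hqb : quadraticChar F b = -1 := quadraticChar_neg_one_iff_not_isSquare.mpr Hb
    rw [hqa, hqb] at hm; norm_num at hm
    have : ¬IsSquare (a * b) := quadraticChar_neg_one_iff_not_isSquare.mp hm
    simp [Ha, Hb, this]
  · have hqa : quadraticChar F a = -1 := quadraticChar_neg_one_iff_not_isSquare.mpr Ha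
    have hqb : quadraticChar F b = 1 := (quadraticChar_one_iff_isSquare hb).mpr Hb
    rw [hqa, hqb] at hm; norm_num at hm
    have : ¬IsSquare (a * b) := quadraticChar_neg_one_iff_not_isSquare.mp hm
    simp [Ha, Hb, this]
  · have hqa : quadraticChar F a = -1 := quadraticChar_neg_one_iff_not_isSquare.mpr Ha
    have hqb : quadraticChar F b = -1 := quadraticChar_neg_one_iff_not_isSquare.mpr Hb
    rw [hqa, hqb] at hm; norm_num at hm
    have : IsSquare (a * b) := (quadraticChar_one_iff_isSquare hab).mp hm
    simp [Ha, Hb, this]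

lemma aux_card_ns (hF : ringChar F ≠ 2) :
    (univ.filter fun t : F => ¬IsSquare t).card = Fintype.card F / 2 ∧
    (univ.filter fun t : F => IsSquare t ∧ t ≠ 0).card = Fintype.card F / 2 := by
  classical
  set NS := univ.filter fun t : F => ¬IsSquare t with hNS
  set SQ := univ.filter fun t : F => IsSquare t ∧ t ≠ 0 with hSQ
  have h0 : (univ.filter fun t : F => IsSquare t) = insert (0 : F) SQ := by
    ext x
    simp only [Finset.mem_filter, Finset.mem_univ, true_and, Finset.mem_insert, hSQ]
    by_cases hx : x = 0 <;> simp [hx, IsSquare.zero]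
  have h0' : (0 : F) ∉ SQ := by simp [hSQ]
  have hcard0 : (univ.filter fun t : F => IsSquare t).card = SQ.card + 1 := by
    rw [h0, Finset.card_insert_of_notMem h0']
  have hpart := Finset.card_filter_add_card_filter_not (s := (univ : Finset F))
    (fun t : F => IsSquare t)
  rw [Finset.card_univ] at hpart
  have hsum := quadraticChar_sum_zero hF
  rw [← Finset.sum_filter_add_sum_filter_not univ (fun t : F => IsSquare t)] at hsum
  have e1 : ∀ x ∈ SQ, quadraticChar F x = 1 := by
    intro x hx
    simp only [hSQ, Finset.mem_filter] at hx
    exact (quadraticChar_one_iff_isSquare hx.2.2).mpr hx.2.1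
  have e2 : ∀ x ∈ NS, quadraticChar F x = -1 := by
    intro x hx
    simp only [hNS, Finset.mem_filter] at hx
    exact quadraticChar_neg_one_iff_not_isSquare.mpr hx.2
  have hs1 : ∑ t ∈ univ.filter (fun t : F => IsSquare t), quadraticChar F t
      = (SQ.card : ℤ) := by
    rw [h0, Finset.sum_insert h0', Finset.sum_congr rfl e1]
    simp
  have hs2 : ∑ t ∈ univ.filter (fun t : F => ¬IsSquare t), quadraticChar F t
      = -(NS.card : ℤ) := by
    rw [show univ.filter (fun t : F => ¬IsSquare t) = NS from rfl,
      Finset.sum_congr rfl e2]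
    simp
  rw [hs1, hs2] at hsum
  have hEq : SQ.card = NS.card := by
    have : (SQ.card : ℤ) = (NS.card : ℤ) := by linarith
    exact_mod_cast this
  have hodd := FiniteField.odd_card_of_char_ne_two hF
  rw [show (univ.filter fun a : F => ¬IsSquare a) = NS from rfl] at hpart
  constructor <;> omega

lemma aux_fiber (hF : ringChar F ≠ 2) {n : F} (hn : ¬IsSquare n)
    (hd : IsSquare (n * (n - 4))) :
    ∃ t₀ t₁ : F, t₀ ≠ t₁ ∧ t₀ ≠ -1 ∧ t₁ ≠ -1 ∧ ¬IsSquare t₀ ∧ ¬IsSquare t₁ ∧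
      (1 + t₀) * (1 + t₁) = n ∧
      ∀ t : F, ((1 + t) ^ 2 = n * t ↔ t = t₀ ∨ t = t₁) := by
  classical
  have h2 : (2 : F) ≠ 0 := Ring.two_ne_zero hF
  obtain ⟨r, hr⟩ := hd
  have hn0 : n ≠ 0 := fun h => hn (h ▸ IsSquare.zero)
  have hn4 : n ≠ 4 := fun h => hn (h ▸ ⟨2, by norm_num⟩)
  have hr0 : r ≠ 0 := by
    intro h
    rw [h, mul_zero] at hr
    rcases mul_eq_zero.mp hr with h' | h'
    · exact hn0 h'
    · exact hn4 (by linear_combination h')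
  obtain ⟨t₀, t₁, hsum, hprodt, hne⟩ :
      ∃ t₀ t₁ : F, t₀ + t₁ = n - 2 ∧ t₀ * t₁ = 1 ∧ t₀ ≠ t₁ := by
    refine ⟨(n - 2 + r) / 2, (n - 2 - r) / 2, by field_simp; ring, ?_, ?_⟩
    · have key : (n - 2 + r) * (n - 2 - r) = 2 * 2 := by linear_combination hr
      rw [div_mul_div_comm, key, div_self (mul_ne_zero h2 h2)]
    · intro h
      field_simp at h
      exact hr0 ((mul_eq_zero.mp (show (2 : F) * r = 0 by linear_combination h)).resolve_left h2)
  have hne₀ : t₀ ≠ -1 := by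
    intro h
    apply hne
    rw [h] at hprodt ⊢
    linear_combination hprodt
  have hne₁ : t₁ ≠ -1 := by
    intro h
    apply hne
    rw [h] at hprodt ⊢
    linear_combination -hprodt
  have ht₀0 : t₀ ≠ 0 := fun h => by rw [h, zero_mul] at hprodt; exact one_ne_zero hprodt.symm
  have ht₁0 : t₁ ≠ 0 := fun h => by rw [h, mul_zero] at hprodt; exact one_ne_zero hprodt.symm
  have hn' : (1 + t₀) * (1 + t₁) = n := by linear_combination hsum + hprodt
  have hg₀ : (1 + t₀) ^ 2 = n * t₀ := by linear_combination t₀ * hsum - hprodt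
  have hg₁ : (1 + t₁) ^ 2 = n * t₁ := by linear_combination t₁ * hsum - hprodt
  have hnsq : ∀ s : F, s ≠ 0 → (1 + s) ^ 2 = n * s → ¬IsSquare s := by
    rintro s hs0 hgs ⟨c, hc⟩
    have hc0 : c ≠ 0 := fun h => hs0 (by rw [hc, h, mul_zero])
    apply hn
    refine ⟨(1 + s) * c⁻¹, ?_⟩
    have hexp : ((1 + s) * c⁻¹) * ((1 + s) * c⁻¹) = (1 + s) ^ 2 * (c * c)⁻¹ := by
      rw [mul_inv]; ring
    rw [hexp, hgs, ← hc]
    exact (mul_inv_cancel_right₀ hs0 n).symm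
  refine ⟨t₀, t₁, hne, hne₀, hne₁, hnsq t₀ ht₀0 hg₀, hnsq t₁ ht₁0 hg₁, hn', fun t => ?_⟩
  constructor
  · intro h
    have hz : (t - t₀) * (t - t₁) = 0 := by linear_combination h - t * hsum + hprodt
    rcases mul_eq_zero.mp hz with h' | h'
    · exact Or.inl (sub_eq_zero.mp h')
    · exact Or.inr (sub_eq_zero.mp h')
  · rintro (rfl | rfl)
    · exact hg₀
    · exact hg₁

lemma aux_two_one (T W : Finset F) (g : F → F)
    (hmaps : ∀ t ∈ T, g t ∈ W)
    (hfib : ∀ n ∈ W, ∃ t₀ t₁ : F, t₀ ≠ t₁ ∧ (T.filter fun t => g t = n) = {t₀, t₁} ∧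
      (1 + t₀) * (1 + t₁) = n) :
    (∏ t ∈ T, (1 + t)) = (∏ n ∈ W, n) ∧ T.card = 2 * W.card := by
  constructor
  · rw [← Finset.prod_fiberwise_of_maps_to hmaps (fun t => 1 + t)]
    refine Finset.prod_congr rfl fun n hn => ?_
    obtain ⟨t₀, t₁, hne, hfe, hp⟩ := hfib n hn
    rw [hfe, Finset.prod_pair hne, hp]
  · rw [Finset.card_eq_sum_card_fiberwise hmaps]
    have h2 : ∀ n ∈ W, (T.filter fun t => g t = n).card = 2 := by
      intro n hn
      obtain ⟨t₀, t₁, hne, hfe, _⟩ := hfib n hn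
      rw [hfe]
      exact Finset.card_pair hne
    rw [Finset.sum_congr rfl h2, Finset.sum_const, smul_eq_mul, mul_comm]

lemma aux_g_props (hF : ringChar F ≠ 2) {t : F} (ht : ¬IsSquare t) (ht1 : t ≠ -1) :
    ¬IsSquare ((1 + t) ^ 2 * t⁻¹) ∧
      (IsSquare (4 - (1 + t) ^ 2 * t⁻¹) ↔ ¬IsSquare (-1 : F)) := by
  have ht0 : t ≠ 0 := fun h => ht (h ▸ IsSquare.zero)
  have htne1 : t ≠ 1 := fun h => ht (h ▸ IsSquare.one)
  have h1t : (1 : F) + t ≠ 0 := fun h => ht1 (by linear_combination h)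
  have htm1 : t - 1 ≠ 0 := sub_ne_zero.mpr htne1
  have hti : ¬IsSquare t⁻¹ := by
    have h := aux_sq_mul hF ht0 (inv_ne_zero ht0)
    rw [mul_inv_cancel₀ ht0] at h
    have : IsSquare (1 : F) := IsSquare.one
    tauto
  have hsq1 : IsSquare ((1 + t) ^ 2) := ⟨1 + t, sq (1 + t)⟩
  have hsq2 : IsSquare ((t - 1) ^ 2) := ⟨t - 1, sq (t - 1)⟩
  constructor
  · rw [aux_sq_mul hF (pow_ne_zero 2 h1t) (inv_ne_zero ht0)]
    tauto
  · have hid : 4 - (1 + t) ^ 2 * t⁻¹ = (-1) * ((t - 1) ^ 2 * t⁻¹) := by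
      field_simp
      ring
    rw [hid]
    have hb : ¬IsSquare ((t - 1) ^ 2 * t⁻¹) := by
      rw [aux_sq_mul hF (pow_ne_zero 2 htm1) (inv_ne_zero ht0)]
      tauto
    have hbne : (t - 1) ^ 2 * t⁻¹ ≠ 0 := mul_ne_zero (pow_ne_zero 2 htm1) (inv_ne_zero ht0)
    rw [aux_sq_mul hF (neg_ne_zero.mpr one_ne_zero) hbne]
    tauto

lemma aux_main (hF : ringChar F ≠ 2) :
    (∏ n ∈ univ.filter (fun n : F => ¬IsSquare n ∧ ¬IsSquare (4 - n)), n) = 2 ∧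
    ((Fintype.card F % 4 = 1 ∧
        4 * (univ.filter (fun n : F => ¬IsSquare n ∧ ¬IsSquare (4 - n))).card
          = Fintype.card F - 1) ∨
     (Fintype.card F % 4 = 3 ∧
        4 * (univ.filter (fun n : F => ¬IsSquare n ∧ ¬IsSquare (4 - n))).card
          = Fintype.card F + 1)) := by
  classical
  have h2 : (2 : F) ≠ 0 := Ring.two_ne_zero hF
  set q := Fintype.card F with hq
  set k := q / 2 with hkdef
  have hodd : q % 2 = 1 := FiniteField.odd_card_of_char_ne_two hF
  have hq2 : 2 ≤ q := Fintype.one_lt_card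
  have hk : q = 2 * k + 1 := by omega
  have hkpos : 0 < k := by omega
  set NS := univ.filter (fun t : F => ¬IsSquare t) with hNS
  set SQ := univ.filter (fun t : F => IsSquare t ∧ t ≠ 0) with hSQ
  set M := univ.filter (fun n : F => ¬IsSquare n ∧ ¬IsSquare (4 - n)) with hM
  obtain ⟨hNScard, hSQcard⟩ := aux_card_ns hF
  rw [← hNS, ← hq, ← hkdef] at hNScard
  rw [← hSQ, ← hq, ← hkdef] at hSQcard
  -- Euler criterion facts
  have hNSroot : ∀ t ∈ NS, t ^ k = (-1 : F) := by
    intro t ht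
    rw [hNS, Finset.mem_filter] at ht
    have ht0 : t ≠ 0 := fun h => ht.2 (h ▸ IsSquare.zero)
    rcases FiniteField.pow_dichotomy hF ht0 with h | h
    · exact absurd ((FiniteField.isSquare_iff hF ht0).mpr h) ht.2
    · exact h
  have hSQroot : ∀ t ∈ SQ, t ^ k = (1 : F) := by
    intro t ht
    rw [hSQ, Finset.mem_filter] at ht
    exact (FiniteField.isSquare_iff hF ht.2.2).mp ht.2.1
  have PNS : ∀ c : F, ∏ t ∈ NS, (c - t) = c ^ k + 1 := by
    intro c
    rw [aux_prod_eq NS k hkpos (-1) hNScard hNSroot c, sub_neg_eq_add]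
  have PSQ : ∀ c : F, ∏ t ∈ SQ, (c - t) = c ^ k - 1 :=
    fun c => aux_prod_eq SQ k hkpos 1 hSQcard hSQroot c
  have hflip : ∀ (T : Finset F), (∏ t ∈ T, (1 + t)) = (-1 : F) ^ T.card * ∏ t ∈ T, ((-1) - t) := by
    intro T
    rw [← Finset.prod_const, ← Finset.prod_mul_distrib]
    exact Finset.prod_congr rfl fun t _ => by ring
  have hprodNS : ∏ t ∈ NS, t = (-1 : F) ^ k * 1 := by
    have h0 := PNS 0
    rw [zero_pow hkpos.ne', zero_add] at h0
    calc ∏ t ∈ NS, t = ∏ t ∈ NS, ((-1) * ((0 : F) - t)) :=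
          Finset.prod_congr rfl fun t _ => by ring
    _ = (-1 : F) ^ NS.card * ∏ t ∈ NS, ((0 : F) - t) := by
          rw [← Finset.prod_const, ← Finset.prod_mul_distrib]
    _ = (-1 : F) ^ k * 1 := by rw [hNScard, h0]
  set g : F → F := fun t => (1 + t) ^ 2 * t⁻¹ with hg
  have hgval : ∀ (n s : F), s ≠ 0 → (g s = n ↔ (1 + s) ^ 2 = n * s) := by
    intro n s hs
    rw [hg]
    constructor
    · intro h
      rw [← h]
      field_simp
    · intro h
      simp only []
      rw [h]
      exact mul_inv_cancel_right₀ hs n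
  have hdisc : ∀ n : F, ¬IsSquare n → (¬IsSquare (4 - n) ↔ IsSquare (-1 : F)) →
      IsSquare (n * (n - 4)) := by
    intro n hn1 hcond
    have hn0 : n ≠ 0 := fun h => hn1 (h ▸ IsSquare.zero)
    have hn4 : n ≠ 4 := fun h => hn1 (h ▸ ⟨2, by norm_num⟩)
    have h4n0 : (4 : F) - n ≠ 0 := fun h => hn4 (by linear_combination -h)
    have e2 : n * (n - 4) = (-1) * (n * (4 - n)) := by ring
    rw [e2, aux_sq_mul hF (neg_ne_zero.mpr one_ne_zero) (mul_ne_zero hn0 h4n0),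
      aux_sq_mul hF hn0 h4n0]
    tauto
  by_cases hm1 : IsSquare (-1 : F)
  · -- q ≡ 1 (mod 4)
    have hq4 : q % 4 ≠ 3 := by rw [hq]; exact (FiniteField.isSquare_neg_one_iff).mp hm1
    have hkeven : k % 2 = 0 := by omega
    have hmaps : ∀ t ∈ NS, g t ∈ M := by
      intro t ht
      rw [hNS, Finset.mem_filter] at ht
      have ht1 : t ≠ -1 := fun h => ht.2 (h ▸ hm1)
      obtain ⟨hg1, hg2⟩ := aux_g_props hF ht.2 ht1
      rw [hM, Finset.mem_filter]
      exact ⟨Finset.mem_univ _, hg1, fun h => (hg2.mp h) hm1⟩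
    have hfib : ∀ n ∈ M, ∃ t₀ t₁ : F, t₀ ≠ t₁ ∧
        (NS.filter fun t => g t = n) = {t₀, t₁} ∧ (1 + t₀) * (1 + t₁) = n := by
      intro n hn
      rw [hM, Finset.mem_filter] at hn
      obtain ⟨-, hn1, hn2⟩ := hn
      have hd : IsSquare (n * (n - 4)) := hdisc n hn1 (by tauto)
      obtain ⟨t₀, t₁, hne, _, _, hs₀, hs₁, hpr, hiff⟩ := aux_fiber hF hn1 hd
      refine ⟨t₀, t₁, hne, ?_, hpr⟩
      ext t
      simp only [Finset.mem_filter, hNS, Finset.mem_univ, true_and, Finset.mem_insert,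
        Finset.mem_singleton]
      constructor
      · rintro ⟨hts, hgt⟩
        have ht0 : t ≠ 0 := fun h => hts (h ▸ IsSquare.zero)
        exact (hiff t).mp ((hgval n t ht0).mp hgt)
      · intro h
        have hsq : ¬IsSquare t := by rcases h with rfl | rfl <;> assumption
        have ht0 : t ≠ 0 := fun h' => hsq (h' ▸ IsSquare.zero)
        exact ⟨hsq, (hgval n t ht0).mpr ((hiff t).mpr h)⟩
    obtain ⟨hprodeq, hcardeq⟩ := aux_two_one NS M g hmaps hfib
    have hNSprod : (∏ t ∈ NS, (1 + t)) = 2 := by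
      rw [hflip NS, hNScard, PNS (-1)]
      have hpow : (-1 : F) ^ k = 1 := (Nat.even_iff.mpr hkeven).neg_one_pow
      rw [hpow]
      norm_num
    have hMprod : (∏ n ∈ M, n) = 2 := by rw [← hprodeq]; exact hNSprod
    refine ⟨hMprod, Or.inl ⟨by omega, ?_⟩⟩
    rw [hNScard] at hcardeq
    omega
  · -- q ≡ 3 (mod 4)
    have hq4 : q % 4 = 3 := by
      by_contra h
      exact hm1 ((FiniteField.isSquare_neg_one_iff (F := F)).mpr (hq ▸ h))
    have hkodd : k % 2 = 1 := by omega
    have hk1 : (-1 : F) ^ k = -1 := (Nat.odd_iff.mpr hkodd).neg_one_pow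
    set E := univ.filter (fun n : F => ¬IsSquare n ∧ IsSquare (4 - n)) with hE
    set NS' := NS.erase (-1) with hNS'
    have hmaps : ∀ t ∈ NS', g t ∈ E := by
      intro t ht
      rw [hNS', Finset.mem_erase, hNS, Finset.mem_filter] at ht
      obtain ⟨hg1, hg2⟩ := aux_g_props hF ht.2.2 ht.1
      rw [hE, Finset.mem_filter]
      exact ⟨Finset.mem_univ _, hg1, hg2.mpr hm1⟩
    have hfib : ∀ n ∈ E, ∃ t₀ t₁ : F, t₀ ≠ t₁ ∧
        (NS'.filter fun t => g t = n) = {t₀, t₁} ∧ (1 + t₀) * (1 + t₁) = n := by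
      intro n hn
      rw [hE, Finset.mem_filter] at hn
      obtain ⟨-, hn1, hn2⟩ := hn
      have hd : IsSquare (n * (n - 4)) := hdisc n hn1 (by tauto)
      obtain ⟨t₀, t₁, hne, hne₀, hne₁, hs₀, hs₁, hpr, hiff⟩ := aux_fiber hF hn1 hd
      refine ⟨t₀, t₁, hne, ?_, hpr⟩
      ext t
      simp only [Finset.mem_filter, hNS', Finset.mem_erase, hNS, Finset.mem_univ, true_and,
        Finset.mem_insert, Finset.mem_singleton]
      constructor
      · rintro ⟨⟨htm1, hts⟩, hgt⟩
        have ht0 : t ≠ 0 := fun h => hts (h ▸ IsSquare.zero)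
        exact (hiff t).mp ((hgval n t ht0).mp hgt)
      · intro h
        have hsq : ¬IsSquare t := by rcases h with rfl | rfl <;> assumption
        have htm1 : t ≠ -1 := by rcases h with rfl | rfl <;> assumption
        have ht0 : t ≠ 0 := fun h' => hsq (h' ▸ IsSquare.zero)
        exact ⟨⟨htm1, hsq⟩, (hgval n t ht0).mpr ((hiff t).mpr h)⟩
    obtain ⟨hprodeq, hcardeq⟩ := aux_two_one NS' E g hmaps hfib
    have hSQ1 : (∏ t ∈ SQ, (1 + t)) = 2 := by
      rw [hflip SQ, hSQcard, PSQ (-1), hk1]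
      norm_num
    have hSQt : (∏ t ∈ SQ, t) = 1 := by
      have h0 := PSQ 0
      rw [zero_pow hkpos.ne'] at h0
      calc ∏ t ∈ SQ, t = ∏ t ∈ SQ, ((-1) * ((0 : F) - t)) :=
            Finset.prod_congr rfl fun t _ => by ring
      _ = (-1 : F) ^ SQ.card * ∏ t ∈ SQ, ((0 : F) - t) := by
            rw [← Finset.prod_const, ← Finset.prod_mul_distrib]
      _ = 1 := by rw [hSQcard, h0, hk1]; norm_num
    have hNSt : (∏ t ∈ NS, t) = -1 := by rw [hprodNS, hk1]; norm_num
    have hm1NS : (-1 : F) ∈ NS := by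
      rw [hNS, Finset.mem_filter]
      exact ⟨Finset.mem_univ _, hm1⟩
    have hNS'card : NS'.card = k - 1 := by
      rw [hNS', Finset.card_erase_of_mem hm1NS, hNScard]
    have hdisj : Disjoint SQ NS := by
      rw [Finset.disjoint_left]
      intro x hx hx'
      rw [hSQ, Finset.mem_filter] at hx
      rw [hNS, Finset.mem_filter] at hx'
      exact hx'.2 hx.2.1
    have hdisj' : Disjoint SQ NS' := hdisj.mono_right (Finset.erase_subset _ _)
    have hsplit : (univ.erase (0 : F)) = SQ ∪ NS := by
      ext x
      simp only [Finset.mem_erase, Finset.mem_univ, and_true, Finset.mem_union, hSQ, hNS,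
        Finset.mem_filter, true_and]
      by_cases hx : x = 0
      · simp [hx, IsSquare.zero]
      · by_cases hx' : IsSquare x <;> tauto
    have hsplit' : (univ.erase (0 : F)).erase (-1) = SQ ∪ NS' := by
      ext x
      simp only [Finset.mem_erase, Finset.mem_univ, and_true, Finset.mem_union, hSQ, hNS',
        hNS, Finset.mem_filter, Finset.mem_erase, true_and]
      by_cases hx : x = 0
      · have : x ≠ -1 := by
          intro h
          exact hm1 (by rw [← h, hx]; exact IsSquare.zero)
        simp [hx, IsSquare.zero, this]
      · by_cases hx' : IsSquare x
        · have : x ≠ -1 := fun h => hm1 (h ▸ hx')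
          tauto
        · tauto
    have hprod1 : (∏ x ∈ univ.erase (0 : F), x) = -1 := by
      rw [hsplit, Finset.prod_union hdisj, hSQt, hNSt]
      norm_num
    have hprod2 : (∏ x ∈ (univ.erase (0 : F)).erase 1, x) = -1 := by
      exact (Finset.prod_erase (f := fun v : F => v) (a := (1 : F)) (univ.erase (0 : F))
        rfl).trans hprod1
    have hbij : (∏ x ∈ (univ.erase (0 : F)).erase (-1), (1 + x))
        = ∏ v ∈ (univ.erase (0 : F)).erase 1, v := by
      refine Finset.prod_nbij' (fun t => 1 + t) (fun v => v - 1) ?_ ?_ ?_ ?_ ?_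
      · intro t ht
        rw [Finset.mem_erase, Finset.mem_erase] at ht ⊢
        refine ⟨fun h => ht.2.1 (by linear_combination h), fun h => ht.1 (by linear_combination h),
          Finset.mem_univ _⟩
      · intro v hv
        rw [Finset.mem_erase, Finset.mem_erase] at hv ⊢
        refine ⟨fun h => hv.2.1 (by linear_combination h), fun h => hv.1 (by linear_combination h),
          Finset.mem_univ _⟩
      · intro a _; ring
      · intro a _; ring
      · intro a _; rfl
    have hSQNS' : (∏ x ∈ SQ ∪ NS', (1 + x)) = -1 := by
      rw [← hsplit', hbij, hprod2]
    have h2D : 2 * (∏ t ∈ NS', (1 + t)) = -1 := by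
      rw [← hSQ1, ← Finset.prod_union hdisj']
      exact hSQNS'
    have hdisjME : Disjoint M E := by
      rw [Finset.disjoint_left]
      intro x hx hx'
      rw [hM, Finset.mem_filter] at hx
      rw [hE, Finset.mem_filter] at hx'
      exact hx.2.2 hx'.2.2
    have hunion : M ∪ E = NS := by
      ext x
      simp only [Finset.mem_union, hM, hE, hNS, Finset.mem_filter, Finset.mem_univ, true_and]
      tauto
    have hME : (∏ n ∈ M, n) * (∏ n ∈ E, n) = -1 := by
      rw [← Finset.prod_union hdisjME, hunion, hNSt]
    have hED : 2 * (∏ n ∈ E, n) = -1 := by rw [← hprodeq]; exact h2D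
    have hD0 : (∏ n ∈ E, n) ≠ 0 := by
      intro h
      rw [h, mul_zero] at hED
      exact (by norm_num : (0 : F) ≠ -1) hED
    have hMprod : (∏ n ∈ M, n) = 2 := mul_right_cancel₀ hD0 (hME.trans hED.symm)
    refine ⟨hMprod, Or.inr ⟨by omega, ?_⟩⟩
    have hcards : M.card + E.card = k := by
      rw [← hNScard, ← hunion, Finset.card_union_of_disjoint hdisjME]
    rw [hNS'card] at hcardeq
    omega

end AuxiliaryLemmas

/-- The product of all `a ∈ F_q` such that both `-a` and `4 + a` are
nonsquares in `F_q` equals `χ(2) · 2`. -/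
theorem prod_nonsquares_eq_chi_two_mul_two {F : Type*} [Field F] [Fintype F]
    (hq : Odd (Fintype.card F)) :
    ∏ a ∈ Finset.univ.filter (fun a : F => ¬ IsSquare (-a) ∧ ¬ IsSquare (4 + a)), a =
      ((χ (2 : F) : ℤ) : F) * 2 := by
  classical
  have hq' : Fintype.card F % 2 = 1 := Nat.odd_iff.mp hq
  have hF : ringChar F ≠ 2 := by
    intro h
    have := FiniteField.even_card_of_char_two h
    omega
  have h2 : (2 : F) ≠ 0 := Ring.two_ne_zero hF
  obtain ⟨hprod, hcard⟩ := aux_main hF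
  set M := Finset.univ.filter (fun n : F => ¬IsSquare n ∧ ¬IsSquare (4 - n)) with hM
  have hSM : (∏ a ∈ Finset.univ.filter (fun a : F => ¬ IsSquare (-a) ∧ ¬ IsSquare (4 + a)), a)
      = ∏ n ∈ M, (-n) := by
    refine Finset.prod_nbij' (fun a => -a) (fun n => -n) ?_ ?_ ?_ ?_ ?_
    · intro a ha
      rw [Finset.mem_filter] at ha ⊢
      refine ⟨Finset.mem_univ _, ha.2.1, ?_⟩
      have e : (4 : F) - -a = 4 + a := by ring
      rw [e]
      exact ha.2.2
    · intro n hn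
      rw [Finset.mem_filter] at hn ⊢
      refine ⟨Finset.mem_univ _, ?_, ?_⟩
      · rw [neg_neg]; exact hn.2.1
      · have e : (4 : F) + -n = 4 - n := by ring
        rw [e]; exact hn.2.2
    · intro a _; exact neg_neg a
    · intro n _; exact neg_neg n
    · intro a _; exact (neg_neg a).symm
  have hMneg : (∏ n ∈ M, (-n)) = (-1 : F) ^ M.card * ∏ n ∈ M, n := by
    rw [← Finset.prod_const, ← Finset.prod_mul_distrib]
    exact Finset.prod_congr rfl fun _ _ => by ring
  rw [hSM, hMneg, hprod]
  have hχ : (χ (2 : F) : ℤ) = if IsSquare (2 : F) then 1 else -1 := by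
    rw [χ, if_neg h2]
  by_cases hsq2 : IsSquare (2 : F)
  · have h8 := (FiniteField.isSquare_two_iff (F := F)).mp hsq2
    have heven : M.card % 2 = 0 := by
      rcases hcard with ⟨h41, hc⟩ | ⟨h43, hc⟩ <;> omega
    rw [hχ, if_pos hsq2]
    rw [(Nat.even_iff.mpr heven).neg_one_pow]
    norm_num
  · have h8 : ¬(Fintype.card F % 8 ≠ 3 ∧ Fintype.card F % 8 ≠ 5) :=
      fun h => hsq2 ((FiniteField.isSquare_two_iff (F := F)).mpr h)
    have hodd : M.card % 2 = 1 := by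
      rcases hcard with ⟨h41, hc⟩ | ⟨h43, hc⟩ <;> omega
    rw [hχ, if_neg hsq2]
    rw [(Nat.odd_iff.mpr hodd).neg_one_pow]
    push_cast
    ring
end
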